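/- Let Z, U be Hilbert spaces, {φ_{j,k}} a complete orthonormal family of Z with finite multiplicities γ_j, 0 < λ_1 < λ_2 < ⋯ → ∞, T(t) the semigroup T(t)z = Σ_j e^{−λ_j t} Σ_k ⟨z, φ_{j,k}⟩ φ_{j,k}, and B : U → Z a bounded linear operator. Assume that for each j the vectors {B* φ_{j,1}, …, B* φ_{j,γ_j}} are linearly independent in U. If z ∈ Z satisfies B* T(t) z = 0 for all t in some interval [0, δ] with δ > 0, then z = 0. -/

import Mathlib

open scoped InnerProductSpace Topology ENNReal
open Filter

-- Auxiliary lemma: a Dirichlet-type series vanishing on an interval vanishes for all t > 0.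
theorem dirichlet_vanish {ι : Type*} (lam : ι → ℝ) (hlam : ∀ i, 0 < lam i)
    (a : ι → ℝ) (habs : Summable (fun i => |a i|))
    (δ : ℝ) (hδ : 0 < δ)
    (hv : ∀ t : ℝ, 0 < t → t ≤ δ → ∑' i, a i * Real.exp (-(lam i) * t) = 0) :
    ∀ t : ℝ, 0 < t → ∑' i, a i * Real.exp (-(lam i) * t) = 0 := by
  set H : Set ℂ := {s : ℂ | 0 < s.re} with hHdef
  set F : ℂ → ℂ := fun s => ∑' i, (a i : ℂ) * Complex.exp (-(lam i : ℂ) * s) with hFdef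
  have hHopen : IsOpen H := isOpen_lt continuous_const Complex.continuous_re
  have hbound : ∀ (i : ι) (s : ℂ), s ∈ H →
      ‖(a i : ℂ) * Complex.exp (-(lam i : ℂ) * s)‖ ≤ |a i| := by
    intro i s hs
    have hs' : 0 < s.re := hs
    have hre : (-(lam i : ℂ) * s).re = -(lam i) * s.re := by
      rw [show (-(lam i : ℂ)) = ((-(lam i) : ℝ) : ℂ) by push_cast; ring, Complex.re_ofReal_mul]
    have h1 : Real.exp ((-(lam i : ℂ) * s).re) ≤ 1 := by
      rw [hre]
      apply Real.exp_le_one_iff.mpr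
      nlinarith [hlam i]
    rw [norm_mul, Complex.norm_exp,
      Complex.norm_real, Real.norm_eq_abs]
    nlinarith [abs_nonneg (a i), Real.exp_pos ((-(lam i : ℂ) * s).re)]
  have hdiff : DifferentiableOn ℂ F H := by
    rw [hFdef]
    refine Complex.differentiableOn_tsum_of_summable_norm habs (fun i => ?_) hHopen hbound
    apply Differentiable.differentiableOn
    exact (differentiable_const _).mul (Complex.differentiable_exp.comp
      ((differentiable_const _).mul differentiable_id))
  have hFreal : ∀ t : ℝ, F (t : ℂ) = ((∑' i, a i * Real.exp (-(lam i) * t) : ℝ) : ℂ) := by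
    intro t
    rw [hFdef, Complex.ofReal_tsum]
    apply tsum_congr
    intro i
    rw [Complex.ofReal_mul, Complex.ofReal_exp]
    push_cast
    ring_nf
  have hseq : Filter.Tendsto (fun n : ℕ => ((δ/2 + δ/4 * (1/(n+1)) : ℝ) : ℂ)) atTop
      (𝓝[≠] ((δ/2 : ℝ) : ℂ)) := by
    rw [tendsto_nhdsWithin_iff]
    constructor
    · have h1 : Filter.Tendsto (fun n : ℕ => (δ/2 + δ/4 * (1/((n:ℝ)+1)) : ℝ)) atTop
          (𝓝 (δ/2)) := by
        have h2 := (tendsto_one_div_add_atTop_nhds_zero_nat.const_mul (δ/4)).const_add (δ/2)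
        simpa using h2
      exact (Complex.continuous_ofReal.tendsto _).comp h1
    · refine Filter.Eventually.of_forall fun n => ?_
      simp only [Set.mem_compl_iff, Set.mem_singleton_iff]
      intro hmem
      have heq : (δ/2 + δ/4 * (1/((n:ℝ)+1)) : ℝ) = δ/2 := Complex.ofReal_injective hmem
      have hpos : (0:ℝ) < δ/4 * (1/((n:ℝ)+1)) := by positivity
      linarith
  have hfreq : ∃ᶠ s in 𝓝[≠] ((δ/2 : ℝ) : ℂ), F s = 0 := by
    apply hseq.frequently
    apply Filter.Frequently.of_forall
    intro n
    have hn1 : (0:ℝ) < (n:ℝ) + 1 := by positivity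
    have ht : (0:ℝ) < δ/2 + δ/4 * (1/((n:ℝ)+1)) := by positivity
    have hle : δ/2 + δ/4 * (1/((n:ℝ)+1)) ≤ δ := by
      have h1 : (1:ℝ)/((n:ℝ)+1) ≤ 1 := by
        rw [div_le_one hn1]
        linarith [(n.cast_nonneg : (0:ℝ) ≤ (n:ℝ))]
      nlinarith
    rw [hFreal _, hv _ ht hle, Complex.ofReal_zero]
  have hH0 : ((δ/2 : ℝ) : ℂ) ∈ H := by
    simp only [hHdef, Set.mem_setOf_eq, Complex.ofReal_re]
    positivity
  have hEq : Set.EqOn F 0 H :=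
    (hdiff.analyticOnNhd hHopen).eqOn_zero_of_preconnected_of_frequently_eq_zero
      (convex_halfSpace_re_gt 0).isPreconnected hH0 hfreq
  intro t ht
  have hFt : F (t : ℂ) = 0 := hEq (by simpa only [hHdef, Set.mem_setOf_eq, Complex.ofReal_re])
  rw [hFreal t] at hFt
  exact_mod_cast hFt

/-- Unique continuation: if for each j the vectors
{B*φ_{j,1},…,B*φ_{j,γ_j}} are linearly independent, and B* T(t) z = 0 for all
t ∈ [0, δ] with δ > 0, then z = 0. -/
theorem unique_continuation_of_indep
    {U Z : Type*} [NormedAddCommGroup U] [InnerProductSpace ℝ U] [CompleteSpace U]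
    [NormedAddCommGroup Z] [InnerProductSpace ℝ Z] [CompleteSpace Z]
    (γ : ℕ → ℕ) (φ : HilbertBasis (Σ j : ℕ, Fin (γ j)) ℝ Z)
    (l : ℕ → ℝ) (hl0 : 0 < l 0) (hlmono : StrictMono l)
    (hltop : Filter.Tendsto l Filter.atTop Filter.atTop)
    (T : ℝ → Z →L[ℝ] Z)
    (hT : ∀ t : ℝ, 0 ≤ t → ∀ z : Z,
      T t z = ∑' i : (Σ j : ℕ, Fin (γ j)), (Real.exp (-(l i.1) * t) * ⟪z, φ i⟫_ℝ) • φ i)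
    (B : U →L[ℝ] Z)
    (hindep : ∀ j : ℕ,
      LinearIndependent ℝ (fun k : Fin (γ j) => ContinuousLinearMap.adjoint B (φ ⟨j, k⟩)))
    (δ : ℝ) (hδ : 0 < δ) (z : Z)
    (hz : ∀ t ∈ Set.Icc (0 : ℝ) δ, ContinuousLinearMap.adjoint B (T t z) = 0) :
    z = 0 := by
  classical
  have hlpos : ∀ j, 0 < l j := fun j => lt_of_lt_of_le hl0 (hlmono.monotone (Nat.zero_le j))
  set c : (Σ j : ℕ, Fin (γ j)) → ℝ := fun i => ⟪z, φ i⟫_ℝ with hcdef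
  have hcsq : Summable (fun i => c i * c i) := by
    have := φ.summable_inner_mul_inner z z
    simpa [hcdef, real_inner_comm] using this
  -- Main per-u claim
  have key : ∀ u : U, ∀ j : ℕ,
      (∀ m, m < j → ∀ k : Fin (γ m), c ⟨m, k⟩ = 0) →
      ∑ k : Fin (γ j), c ⟨j, k⟩ * ⟪B u, φ ⟨j, k⟩⟫_ℝ = 0 := by
    intro u j hprev
    set d : (Σ j : ℕ, Fin (γ j)) → ℝ := fun i => ⟪B u, φ i⟫_ℝ with hddef
    set a : (Σ j : ℕ, Fin (γ j)) → ℝ := fun i => c i * d i with hadef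
    have hdsq : Summable (fun i => d i * d i) := by
      have := φ.summable_inner_mul_inner (B u) (B u)
      simpa [hddef, real_inner_comm] using this
    have habs : Summable (fun i => |a i|) := by
      refine Summable.of_nonneg_of_le (fun i => abs_nonneg _)
        (fun i => ?_) (((hcsq.add hdsq)).mul_left (1/2))
      have h2 : 2 * |c i| * |d i| ≤ |c i| ^ 2 + |d i| ^ 2 := two_mul_le_add_sq _ _
      rw [hadef]
      simp only [abs_mul]
      nlinarith [abs_nonneg (c i), abs_nonneg (d i), sq_abs (c i), sq_abs (d i)]
    -- HasSum for each t ≥ 0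
    have hg : ∀ t : ℝ, 0 ≤ t →
        HasSum (fun i => a i * Real.exp (-(l i.1) * t)) ⟪B u, T t z⟫_ℝ := by
      intro t ht
      set f : (Σ j : ℕ, Fin (γ j)) → ℝ := fun i => Real.exp (-(l i.1) * t) * c i with hfdef
      have hexple : ∀ i : (Σ j : ℕ, Fin (γ j)), Real.exp (-(l i.1) * t) ≤ 1 := by
        intro i
        apply Real.exp_le_one_iff.mpr
        have := (hlpos i.1).le
        nlinarith
      have hmem : Memℓp f 2 := by
        apply memℓp_gen
        have h2 : ((2 : ℝ≥0∞)).toReal = (2 : ℝ) := by norm_num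
        rw [h2]
        refine Summable.of_nonneg_of_le (fun i => Real.rpow_nonneg (norm_nonneg _) _)
          (fun i => ?_) hcsq
        rw [show ((2:ℝ)) = ((2:ℕ):ℝ) by norm_num, Real.rpow_natCast]
        have h1 : ‖f i‖ ≤ |c i| := by
          rw [hfdef]
          simp only [Real.norm_eq_abs, abs_mul]
          have := abs_of_pos (Real.exp_pos (-(l i.1) * t))
          nlinarith [abs_nonneg (c i), Real.exp_pos (-(l i.1) * t), hexple i]
        calc ‖f i‖ ^ 2 ≤ |c i| ^ 2 := by
              apply pow_le_pow_left₀ (norm_nonneg _) h1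
          _ = c i * c i := by rw [sq_abs]; ring
      have hvec : HasSum (fun i => f i • φ i) (T t z) := by
        have h1 := φ.hasSum_repr_symm ⟨f, hmem⟩
        have hco : ∀ i, ((⟨f, hmem⟩ : lp (fun _ : (Σ j : ℕ, Fin (γ j)) => ℝ) 2) : _ → ℝ) i = f i :=
          fun i => rfl
        have h2 : T t z = φ.repr.symm ⟨f, hmem⟩ := by
          rw [hT t ht z, ← h1.tsum_eq]
        rw [h2]
        simpa only [hco] using h1
      have hm := hvec.mapL (innerSL ℝ (B u))
      have heq : (fun i => (innerSL ℝ (B u)) (f i • φ i))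
          = fun i => a i * Real.exp (-(l i.1) * t) := by
        funext i
        simp only [innerSL_apply_apply, real_inner_smul_right, hadef, hfdef, hddef]
        ring
      rw [heq] at hm
      simpa using hm
    have hzero : ∀ t ∈ Set.Icc (0:ℝ) δ, ⟪B u, T t z⟫_ℝ = 0 := by
      intro t ht
      have h1 : ⟪u, ContinuousLinearMap.adjoint B (T t z)⟫_ℝ = ⟪B u, T t z⟫_ℝ :=
        ContinuousLinearMap.adjoint_inner_right B u (T t z)
      rw [hz t ht] at h1
      simpa using h1.symm
    have hvanish : ∀ t : ℝ, 0 < t → ∑' i, a i * Real.exp (-(l i.1) * t) = 0 := by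
      apply dirichlet_vanish (fun i => l i.1) (fun i => hlpos i.1) a habs δ hδ
      intro t ht hle
      rw [(hg t ht.le).tsum_eq, hzero t ⟨ht.le, hle⟩]
    have hS : ∀ t : ℝ, 0 < t → HasSum (fun i => a i * Real.exp (-(l i.1) * t)) 0 := by
      intro t ht
      have h := hg t ht.le
      have h0 : ⟪B u, T t z⟫_ℝ = 0 := by rw [← h.tsum_eq]; exact hvanish t ht
      rwa [h0] at h
    set A : ℕ → ℝ := fun m => ∑ k : Fin (γ m), a ⟨m, k⟩ with hAdef
    have hAprev : ∀ m, m < j → A m = 0 := by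
      intro m hm
      rw [hAdef]
      apply Finset.sum_eq_zero
      intro k _
      rw [hadef]
      simp only [hprev m hm k, zero_mul]
    have hgA : ∀ t : ℝ, 0 < t → HasSum (fun m => A m * Real.exp (-(l m) * t)) 0 := by
      intro t ht
      refine (hS t ht).sigma fun m => ?_
      have h1 : HasSum (fun k : Fin (γ m) => a ⟨m, k⟩ * Real.exp (-(l m) * t))
          ((∑ k : Fin (γ m), a ⟨m, k⟩) * Real.exp (-(l m) * t)) := by
        rw [Finset.sum_mul]
        exact hasSum_fintype _
      exact h1
    have hAabs : Summable (fun m => ∑ k : Fin (γ m), |a ⟨m, k⟩|) := by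
      have h1 := habs.sigma
      simpa [tsum_fintype] using h1
    have hAsum : Summable fun m => |A m| := by
      refine Summable.of_nonneg_of_le (fun m => abs_nonneg _) (fun m => ?_) hAabs
      exact Finset.abs_sum_le_sum_abs _ _
    have hAj : A j = 0 := by
      set G : ℕ → ℕ → ℝ := fun n m => A m * Real.exp ((l j - l m) * (n + 1)) with hGdef
      have hGsum : ∀ n : ℕ, HasSum (G n) 0 := by
        intro n
        have ht : (0:ℝ) < ((n:ℝ) + 1) := by positivity
        have h := (hgA ((n:ℝ)+1) ht).mul_left (Real.exp (l j * ((n:ℝ)+1)))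
        simp only [mul_zero] at h
        have heq : (fun m => Real.exp (l j * ((n:ℝ)+1)) * (A m * Real.exp (-(l m) * ((n:ℝ)+1))))
            = G n := by
          funext m
          rw [hGdef]
          have h2 : Real.exp (l j * ((n:ℝ)+1)) * Real.exp (-(l m) * ((n:ℝ)+1))
              = Real.exp ((l j - l m) * ((n:ℝ)+1)) := by
            rw [← Real.exp_add]
            ring_nf
          push_cast
          rw [show Real.exp (l j * ((n:ℝ)+1)) * (A m * Real.exp (-(l m) * ((n:ℝ)+1)))
              = A m * (Real.exp (l j * ((n:ℝ)+1)) * Real.exp (-(l m) * ((n:ℝ)+1))) by ring, h2]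
        rwa [heq] at h
      have hlim : Filter.Tendsto (fun n : ℕ => ∑' m, G n m) atTop
          (𝓝 (∑' m : ℕ, if m = j then A j else 0)) := by
        apply tendsto_tsum_of_dominated_convergence hAsum
        · intro m
          rcases lt_trichotomy m j with h | rfl | h
          · have : ∀ n : ℕ, G n m = 0 := by
              intro n
              rw [hGdef]
              simp [hAprev m h]
            simp only [this, if_neg h.ne]
            exact tendsto_const_nhds
          · have : ∀ n : ℕ, G n m = A m := by
              intro n
              rw [hGdef]
              simp
            simp only [this, if_pos rfl]
            exact tendsto_const_nhds
          · have hneg : l j - l m < 0 := sub_neg.mpr (hlmono h)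
            have h1 : Filter.Tendsto (fun n : ℕ => ((n:ℝ) + 1)) atTop atTop :=
              tendsto_atTop_add_const_right _ 1 tendsto_natCast_atTop_atTop
            have h2 : Filter.Tendsto (fun n : ℕ => (l j - l m) * ((n:ℝ)+1)) atTop atBot :=
              h1.const_mul_atTop_of_neg hneg
            have h3 := Real.tendsto_exp_atBot.comp h2
            have h4 := h3.const_mul (A m)
            simp only [mul_zero] at h4
            have heq5 : (fun n : ℕ => A m * (Real.exp ∘ fun n : ℕ => (l j - l m) * ((n:ℝ)+1)) n)
                = fun n : ℕ => G n m := by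
              funext n
              rw [hGdef]
              simp [Function.comp]
            rw [if_neg (by omega : ¬ m = j)]
            exact heq5 ▸ h4
        · refine Filter.Eventually.of_forall fun n => fun m => ?_
          rcases le_or_gt j m with h | h
          · have hle0 : (l j - l m) * ((n:ℝ)+1) ≤ 0 := by
              have := hlmono.monotone h
              have hn : (0:ℝ) ≤ (n:ℝ) + 1 := by positivity
              nlinarith
            have hexp1 : Real.exp ((l j - l m) * ((n:ℝ)+1)) ≤ 1 := Real.exp_le_one_iff.mpr hle0
            rw [hGdef]
            simp only [Real.norm_eq_abs, abs_mul, abs_of_pos (Real.exp_pos _)]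
            push_cast
            nlinarith [abs_nonneg (A m), Real.exp_pos ((l j - l m) * ((n:ℝ)+1))]
          · rw [hGdef]
            simp only [hAprev m h, zero_mul, norm_zero]
            exact abs_nonneg _
      have hzero' : Filter.Tendsto (fun _ : ℕ => (0:ℝ)) atTop
          (𝓝 (∑' m : ℕ, if m = j then A j else 0)) := by
        have heq : (fun n : ℕ => ∑' m, G n m) = fun _ : ℕ => (0:ℝ) := by
          funext n
          exact (hGsum n).tsum_eq
        rwa [heq] at hlim
      have := tendsto_nhds_unique hzero' tendsto_const_nhds
      rwa [tsum_ite_eq] at this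
    rw [hAdef] at hAj
    simp only [hadef] at hAj
    exact hAj
  -- Strong induction: all coefficients vanish
  have hc0 : ∀ j : ℕ, ∀ k : Fin (γ j), c ⟨j, k⟩ = 0 := by
    intro j
    induction j using Nat.strong_induction_on with
    | _ j IH =>
      intro k
      set v : U := ∑ k : Fin (γ j), c ⟨j, k⟩ • (ContinuousLinearMap.adjoint B) (φ ⟨j, k⟩)
        with hvdef
      have hAv := key v j (fun m hm => IH m hm)
      have hvz : v = 0 := by
        have h1 : ∑ k : Fin (γ j), c ⟨j, k⟩ * ⟪B v, φ ⟨j, k⟩⟫_ℝ = ⟪v, v⟫_ℝ := by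
          calc ∑ k : Fin (γ j), c ⟨j, k⟩ * ⟪B v, φ ⟨j, k⟩⟫_ℝ
              = ∑ k : Fin (γ j), ⟪v, c ⟨j, k⟩ • (ContinuousLinearMap.adjoint B) (φ ⟨j, k⟩)⟫_ℝ := by
                refine Finset.sum_congr rfl fun k _ => ?_
                rw [real_inner_smul_right,
                  ContinuousLinearMap.adjoint_inner_right B v (φ ⟨j, k⟩)]
            _ = ⟪v, ∑ k : Fin (γ j), c ⟨j, k⟩ • (ContinuousLinearMap.adjoint B) (φ ⟨j, k⟩)⟫_ℝ :=
                (inner_sum _ _ _).symm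
            _ = ⟪v, v⟫_ℝ := by rw [← hvdef]
        rw [h1] at hAv
        exact inner_self_eq_zero.mp hAv
      have h2 : ∑ k ∈ Finset.univ, c ⟨j, k⟩ • (ContinuousLinearMap.adjoint B) (φ ⟨j, k⟩) = 0 := by
        rw [← hvdef]
        exact hvz
      exact linearIndependent_iff'.mp (hindep j) Finset.univ (fun k => c ⟨j, k⟩) h2 k
        (Finset.mem_univ k)
  -- Conclude z = 0
  have hrepr := φ.hasSum_repr z
  have hterm : (fun i : (Σ j : ℕ, Fin (γ j)) => φ.repr z i • φ i) = fun _ => (0 : Z) := by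
    funext i
    rcases i with ⟨j, k⟩
    rw [φ.repr_apply_apply, real_inner_comm,
      show ⟪z, φ ⟨j, k⟩⟫_ℝ = c ⟨j, k⟩ from rfl, hc0 j k, zero_smul]
  rw [hterm] at hrepr
  exact hrepr.unique hasSum_zero
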